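/- Consider the R-process with parameters r ≥ 2, ε ∈ [0,1], δ > 0 and γ = 1−(1+δ)/r. For every initial state U and every admissible strategy F, the greedy strategy F^g satisfies E[I_∞(U,F^g)] ≥ E[I_∞(U,F)]. -/

import Mathlib

open Finset Filter
open scoped ENNReal Classical

/-- State of the R-process: internal check nodes `C`, surviving edges `S`,
boundary variables `B`, internal variables `I`. -/
structure RState where
  C : ℤ
  S : ℤ
  B : ℤ
  I : ℤ

/-- A (possibly randomized) strategy: at each step it sees the history of
past `(coin, aux)` pairs together with its current auxiliary random value
(drawn i.i.d. from `aux`), and decides whether to perform a boundary step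
(`true`) or a regular step (`false`). -/
structure RStrategy where
  aux : PMF ℕ
  decide : List (Bool × ℕ) → ℕ → Bool

/-- One run of the R-process for `t` steps, driven by the stream `h` of
`(coin, aux)` pairs: the coin `true` means a regular step "extends"
(probability ε), `false` that it "prunes"; the process freezes once `S ≤ 0`. -/
def rstep (r : ℕ) (F : RStrategy) (U0 : RState) (h : ℕ → Bool × ℕ) : ℕ → RState
  | 0 => U0
  | t + 1 =>
    let cur := rstep r F U0 h t
    if cur.S ≤ 0 then cur
    else if F.decide (List.ofFn fun i : Fin t => h i) (h t).2 then
      ⟨cur.C + 1, cur.S + ((r : ℤ) - 2), cur.B - 1, cur.I + 1⟩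
    else if (h t).1 then
      ⟨cur.C + 2, cur.S + (2 * (r : ℤ) - 3), cur.B, cur.I + 1⟩
    else
      ⟨cur.C, cur.S - 1, cur.B + 1, cur.I⟩

/-- Admissibility of a strategy from initial state `U0`: along every possible
history the state always satisfies `γ r C ≤ S + B + I`. -/
def RAdmissible (r : ℕ) (γ : ℝ) (F : RStrategy) (U0 : RState) : Prop :=
  ∀ (h : ℕ → Bool × ℕ) (t : ℕ),
    γ * r * ((rstep r F U0 h t).C : ℝ) ≤
      ((rstep r F U0 h t).S : ℝ) + ((rstep r F U0 h t).B : ℝ) +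
        ((rstep r F U0 h t).I : ℝ)

/-- Product of `k` independent copies of a PMF. -/
noncomputable def pmfPi {α : Type} (p : PMF α) : (k : ℕ) → PMF (Fin k → α)
  | 0 => PMF.pure fun i => i.elim0
  | k + 1 => p.bind fun x => (pmfPi p k).map (Fin.cons x)

/-- Bernoulli PMF on `Bool` with success probability `ε` (clipped to `[0,1]`). -/
noncomputable def bern (ε : ℝ) : PMF Bool :=
  PMF.bernoulli (min (Real.toNNReal ε) 1) (min_le_right _ _)

/-- Distribution of one `(coin, aux)` pair: an independent Bernoulli(ε) coin
and an auxiliary value with law `ν`. -/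
noncomputable def coinPMF (ε : ℝ) (ν : PMF ℕ) : PMF (Bool × ℕ) :=
  (bern ε).bind fun c => ν.map fun u => (c, u)

/-- Extend a finite tuple to an infinite stream by a default value. -/
def extendFin {α : Type} (d : α) {t : ℕ} (hf : Fin t → α) : ℕ → α :=
  fun i => if h : i < t then hf ⟨i, h⟩ else d

/-- Expected total increase `E[I_∞ - I_0]` of the `I`-component of the
R-process started at `U0` under strategy `F` (the increments of `I` are
nonnegative, so this is the monotone limit of the finite-horizon
expectations). -/
noncomputable def EIinc (r : ℕ) (ε : ℝ) (F : RStrategy) (U0 : RState) : ℝ≥0∞ :=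
  ⨆ t : ℕ, ∑' hf : Fin t → Bool × ℕ,
    pmfPi (coinPMF ε F.aux) t hf *
      (((rstep r F U0 (extendFin (false, 0) hf) t).I - U0.I).toNat : ℝ≥0∞)

/-- One step of the greedy replay used to define the greedy strategy. -/
noncomputable def greedyStep (r : ℕ) (δ : ℝ) (st : RState) (x : Bool × ℕ) : RState :=
  if st.S ≤ 0 then st
  else if (1 - (1 + δ) / r) * r * (st.C : ℝ) ≤
      (st.S : ℝ) + (st.B : ℝ) + (st.I : ℝ) - (1 - δ) then
    ⟨st.C + 1, st.S + ((r : ℤ) - 2), st.B - 1, st.I + 1⟩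
  else if x.1 then
    ⟨st.C + 2, st.S + (2 * (r : ℤ) - 3), st.B, st.I + 1⟩
  else
    ⟨st.C, st.S - 1, st.B + 1, st.I⟩

/-- The greedy strategy `F^g` (for `γ = 1 - (1+δ)/r`): perform a boundary step
exactly when `γ r C ≤ S + B + I - (1-δ)` holds for the current state (which it
recomputes by replaying the history). -/
noncomputable def greedy (r : ℕ) (δ : ℝ) (U0 : RState) : RStrategy where
  aux := PMF.pure 0
  decide hist _ :=
    let st := hist.foldl (greedyStep r δ) U0
    if (1 - (1 + δ) / r) * r * (st.C : ℝ) ≤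
        (st.S : ℝ) + (st.B : ℝ) + (st.I : ℝ) - (1 - δ) then true else false


/-! ### Auxiliary development for `stmt11` -/

section Stmt11Aux

/-- Boundary step on states. -/
def bdryS (r : ℕ) (U : RState) : RState := ⟨U.C + 1, U.S + ((r : ℤ) - 2), U.B - 1, U.I + 1⟩

/-- Regular-extend step on states. -/
def extS (r : ℕ) (U : RState) : RState := ⟨U.C + 2, U.S + (2 * (r : ℤ) - 3), U.B, U.I + 1⟩

/-- Regular-prune step on states. -/
def pruneS (U : RState) : RState := ⟨U.C, U.S - 1, U.B + 1, U.I⟩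

/-- The greedy condition. -/
def gcond (r : ℕ) (δ : ℝ) (U : RState) : Prop :=
  (1 - (1 + δ) / r) * r * (U.C : ℝ) ≤ (U.S : ℝ) + (U.B : ℝ) + (U.I : ℝ) - (1 - δ)

/-- Value of the greedy strategy at finite horizon. -/
noncomputable def gval (r : ℕ) (δ : ℝ) (p : ℝ≥0∞) : ℕ → RState → ℝ≥0∞
  | 0, _ => 0
  | n + 1, U =>
    if U.S ≤ 0 then 0
    else if gcond r δ U then 1 + gval r δ p n (bdryS r U)
    else p * (1 + gval r δ p n (extS r U)) + (1 - p) * gval r δ p n (pruneS U)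

lemma gcond_ext {r : ℕ} (hr : 2 ≤ r) {δ : ℝ} (hδ : 0 < δ) {U : RState}
    (h : gcond r δ U) : gcond r δ (extS r U) := by
  have hr0 : (0 : ℝ) < (r : ℝ) := by exact_mod_cast Nat.lt_of_lt_of_le Nat.zero_lt_two hr
  have hrr : (1 - (1 + δ) / r) * (r : ℝ) = (r : ℝ) - (1 + δ) := by field_simp
  unfold gcond at *
  simp only [extS] at *
  push_cast
  nlinarith [h, hδ]

lemma gcond_prune {r : ℕ} {δ : ℝ} {U : RState}
    (h : gcond r δ U) : gcond r δ (pruneS U) := by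
  unfold gcond at *
  simp only [pruneS] at *
  push_cast
  linarith

lemma bdry_ext_comm (r : ℕ) (U : RState) : bdryS r (extS r U) = extS r (bdryS r U) := by
  simp only [bdryS, extS]
  congr 1 <;> ring

lemma bdry_prune_comm (r : ℕ) (U : RState) : bdryS r (pruneS U) = pruneS (bdryS r U) := by
  simp only [bdryS, pruneS]
  congr 1 <;> ring

lemma gval_key {r : ℕ} (hr : 2 ≤ r) {δ : ℝ} (hδ : 0 < δ) {p : ℝ≥0∞} (hp : p ≤ 1) :
    ∀ n (U : RState), 1 ≤ U.S → gcond r δ U →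
      p * (1 + gval r δ p n (extS r U)) + (1 - p) * gval r δ p n (pruneS U)
        ≤ 1 + gval r δ p n (bdryS r U) := by
  intro n
  induction n with
  | zero =>
    intro U hS hc
    simp only [gval]
    simpa using hp
  | succ n ih =>
    intro U hS hc
    have hpq : p + (1 - p) = 1 := add_tsub_cancel_of_le hp
    have hSext : ¬ (extS r U).S ≤ 0 := by
      simp only [extS]; omega
    have hSbd : ¬ (bdryS r U).S ≤ 0 := by
      simp only [bdryS]; omega
    have hcext : gcond r δ (extS r U) := gcond_ext hr hδ hc
    have hcprune : gcond r δ (pruneS U) := gcond_prune hc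
    have hext : gval r δ p (n+1) (extS r U) = 1 + gval r δ p n (bdryS r (extS r U)) := by
      rw [gval, if_neg hSext, if_pos hcext]
    set A := gval r δ p n (bdryS r (extS r U)) with hA
    set B := gval r δ p n (bdryS r (pruneS U)) with hB
    by_cases hb : gcond r δ (bdryS r U)
    · have hbd : gval r δ p (n+1) (bdryS r U) = 1 + gval r δ p n (bdryS r (bdryS r U)) := by
        rw [gval, if_neg hSbd, if_pos hb]
      have hSbd1 : 1 ≤ (bdryS r U).S := by simp only [bdryS]; omega
      have IH := ih (bdryS r U) hSbd1 hb
      rw [← bdry_ext_comm, ← bdry_prune_comm] at IH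
      set D := gval r δ p n (bdryS r (bdryS r U)) with hD
      rw [hext, hbd]
      by_cases hS1 : U.S ≤ 1
      · have hprune0 : gval r δ p (n+1) (pruneS U) = 0 := by
          rw [gval, if_pos]; simp only [pruneS]; omega
        rw [hprune0, mul_zero, add_zero]
        calc p * (1 + (1 + A)) = p + p * (1 + A) := by ring
          _ ≤ 1 + (p * (1 + A) + (1 - p) * B) := add_le_add hp (le_add_right le_rfl)
          _ ≤ 1 + (1 + D) := add_le_add_right IH 1
      · have hprune : gval r δ p (n+1) (pruneS U) = 1 + B := by
          rw [gval, if_neg (by simp only [pruneS]; omega), if_pos hcprune]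
        rw [hprune]
        calc p * (1 + (1 + A)) + (1 - p) * (1 + B)
            = (p + (1 - p)) + (p * (1 + A) + (1 - p) * B) := by ring
          _ = 1 + (p * (1 + A) + (1 - p) * B) := by rw [hpq]
          _ ≤ 1 + (p * (1 + A) + (1 - p) * B) := le_rfl
          _ ≤ 1 + (1 + D) := add_le_add_right IH 1
    · have hbd : gval r δ p (n+1) (bdryS r U)
          = p * (1 + A) + (1 - p) * B := by
        rw [gval, if_neg hSbd, if_neg hb, ← bdry_ext_comm, ← bdry_prune_comm, ← hA, ← hB]
      rw [hext, hbd]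
      by_cases hS1 : U.S ≤ 1
      · have hprune0 : gval r δ p (n+1) (pruneS U) = 0 := by
          rw [gval, if_pos]; simp only [pruneS]; omega
        rw [hprune0, mul_zero, add_zero]
        calc p * (1 + (1 + A)) = p + p * (1 + A) := by ring
          _ ≤ 1 + (p * (1 + A) + (1 - p) * B) := add_le_add hp (le_add_right le_rfl)
      · have hprune : gval r δ p (n+1) (pruneS U) = 1 + B := by
          rw [gval, if_neg (by simp only [pruneS]; omega), if_pos hcprune]
        rw [hprune]
        calc p * (1 + (1 + A)) + (1 - p) * (1 + B)
            = (p + (1 - p)) + (p * (1 + A) + (1 - p) * B) := by ring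
          _ = 1 + (p * (1 + A) + (1 - p) * B) := by rw [hpq]
          _ ≤ 1 + (p * (1 + A) + (1 - p) * B) := le_rfl

lemma tsum_bind_mul {α β : Type} (m : PMF α) (k : α → PMF β) (W : β → ℝ≥0∞) :
    ∑' y, (m.bind k) y * W y = ∑' a, m a * ∑' y, k a y * W y := by
  simp only [PMF.bind_apply]
  calc ∑' y, (∑' a, m a * k a y) * W y
      = ∑' y, ∑' a, m a * k a y * W y :=
        tsum_congr fun y => ENNReal.tsum_mul_right.symm
    _ = ∑' a, ∑' y, m a * k a y * W y := ENNReal.tsum_comm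
    _ = ∑' a, m a * ∑' y, k a y * W y := tsum_congr fun a => by
        rw [← ENNReal.tsum_mul_left]
        exact tsum_congr fun y => by ring

lemma tsum_map_mul {α β : Type} (m : PMF α) (f : α → β) (W : β → ℝ≥0∞) :
    ∑' y, (m.map f) y * W y = ∑' a, m a * W (f a) := by
  simp only [PMF.map_apply]
  calc ∑' y, (∑' a, if y = f a then m a else 0) * W y
      = ∑' y, ∑' a, (if y = f a then m a * W y else 0) := tsum_congr fun y => by
        rw [← ENNReal.tsum_mul_right]
        exact tsum_congr fun a => by split <;> simp
    _ = ∑' a, ∑' y, (if y = f a then m a * W y else 0) := ENNReal.tsum_comm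
    _ = ∑' a, m a * W (f a) := tsum_congr fun a => by
        rw [tsum_eq_single (f a) fun y hy => if_neg hy, if_pos rfl]

lemma tsum_pmfPi_succ {α : Type} (μ : PMF α) (t : ℕ) (f : (Fin (t + 1) → α) → ℝ≥0∞) :
    ∑' hf, pmfPi μ (t + 1) hf * f hf
      = ∑' x, μ x * ∑' gf, pmfPi μ t gf * f (Fin.cons x gf) := by
  rw [show pmfPi μ (t + 1) = μ.bind fun x => (pmfPi μ t).map (Fin.cons x) from rfl,
    tsum_bind_mul]
  exact tsum_congr fun x => by rw [tsum_map_mul]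

lemma tsum_coinPMF (ε : ℝ) (ν : PMF ℕ) (H : Bool × ℕ → ℝ≥0∞) :
    ∑' x, coinPMF ε ν x * H x
      = ∑' u, ν u * (min (ENNReal.ofReal ε) 1 * H (true, u)
          + (1 - min (ENNReal.ofReal ε) 1) * H (false, u)) := by
  rw [coinPMF, tsum_bind_mul]
  have h1 : ∀ c : Bool, ∑' x, (ν.map fun u => (c, u)) x * H x = ∑' u, ν u * H (c, u) :=
    fun c => tsum_map_mul ν _ H
  rw [tsum_bool, h1, h1]
  rw [show bern ε false = 1 - min (ENNReal.ofReal ε) 1 by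
      simp only [bern, PMF.bernoulli_apply, cond_false, ENNReal.coe_sub, ENNReal.coe_min, ENNReal.coe_one, ENNReal.ofReal],
    show bern ε true = min (ENNReal.ofReal ε) 1 by
      simp only [bern, PMF.bernoulli_apply, cond_true, ENNReal.coe_min, ENNReal.coe_one, ENNReal.ofReal]]
  rw [← ENNReal.tsum_mul_left, ← ENNReal.tsum_mul_left, ← ENNReal.tsum_add]
  exact tsum_congr fun u => by ring

lemma rstep_frozen (r : ℕ) (F : RStrategy) (U0 : RState) (h : ℕ → Bool × ℕ)
    (hS : U0.S ≤ 0) : ∀ t, rstep r F U0 h t = U0 := by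
  intro t
  induction t with
  | zero => rfl
  | succ t ih => simp only [rstep, ih, if_pos hS]

lemma rstep_I_le (r : ℕ) (F : RStrategy) (U0 : RState) (h : ℕ → Bool × ℕ) :
    ∀ t, U0.I ≤ (rstep r F U0 h t).I := by
  intro t
  induction t with
  | zero => exact le_rfl
  | succ t ih =>
    simp only [rstep]
    split_ifs <;> first
      | exact ih
      | exact le_trans ih (le_of_lt (lt_add_one _))

/-- Prepend a pair to a stream. -/
def consStream (x : Bool × ℕ) (h : ℕ → Bool × ℕ) : ℕ → Bool × ℕ
  | 0 => x
  | i + 1 => h i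

/-- Shift a strategy by one observed pair. -/
def shiftStrat (F : RStrategy) (x : Bool × ℕ) : RStrategy :=
  ⟨F.aux, fun l u => F.decide (x :: l) u⟩

/-- The state after one step of the process. -/
def step1 (r : ℕ) (F : RStrategy) (U0 : RState) (x : Bool × ℕ) : RState :=
  if U0.S ≤ 0 then U0
  else if F.decide [] x.2 then bdryS r U0
  else if x.1 then extS r U0 else pruneS U0

lemma rstep_one (r : ℕ) (F : RStrategy) (U0 : RState) (h : ℕ → Bool × ℕ) :
    rstep r F U0 h 1 = step1 r F U0 (h 0) := by
  simp only [rstep, step1, bdryS, extS, pruneS, List.ofFn_zero]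

lemma rstep_shift (r : ℕ) (F : RStrategy) (U0 : RState) (x : Bool × ℕ) (h : ℕ → Bool × ℕ) :
    ∀ t, rstep r F U0 (consStream x h) (t + 1)
      = rstep r (shiftStrat F x) (step1 r F U0 x) h t := by
  intro t
  induction t with
  | zero => exact rstep_one r F U0 (consStream x h)
  | succ t ih =>
    have hl : (List.ofFn fun i : Fin (t + 1) => consStream x h i)
        = x :: List.ofFn fun i : Fin t => h i := by
      rw [List.ofFn_succ]; rfl
    conv_lhs => rw [rstep]
    conv_rhs => rw [rstep]
    rw [ih, hl]
    rfl

lemma extendFin_cons (t : ℕ) (x : Bool × ℕ) (g : Fin t → Bool × ℕ) :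
    extendFin (false, 0) (Fin.cons x g : Fin (t + 1) → Bool × ℕ)
      = consStream x (extendFin (false, 0) g) := by
  funext i
  cases i with
  | zero =>
    simp only [extendFin, consStream]
    rw [dif_pos (Nat.succ_pos t)]
    rfl
  | succ i =>
    simp only [extendFin, consStream]
    by_cases hi : i < t
    · rw [dif_pos (Nat.succ_lt_succ hi), dif_pos hi]
      have he : (⟨i + 1, Nat.succ_lt_succ hi⟩ : Fin (t + 1)) = Fin.succ ⟨i, hi⟩ := rfl
      rw [he, Fin.cons_succ]
    · rw [dif_neg (by omega), dif_neg hi]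

lemma RAdmissible_shift {r : ℕ} {γ : ℝ} {F : RStrategy} {U0 : RState}
    (hadm : RAdmissible r γ F U0) (x : Bool × ℕ) :
    RAdmissible r γ (shiftStrat F x) (step1 r F U0 x) := by
  intro h t
  rw [← rstep_shift]
  exact hadm (consStream x h) (t + 1)

lemma gcond_of_bdry_adm {r : ℕ} (hr : 2 ≤ r) {δ γ : ℝ} (hγ : γ = 1 - (1 + δ) / r)
    {U : RState}
    (h : γ * r * ((bdryS r U).C : ℝ)
      ≤ ((bdryS r U).S : ℝ) + ((bdryS r U).B : ℝ) + ((bdryS r U).I : ℝ)) :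
    gcond r δ U := by
  have hr0 : (0 : ℝ) < (r : ℝ) := by exact_mod_cast Nat.lt_of_lt_of_le Nat.zero_lt_two hr
  have e : (1 - (1 + δ) / r) * (r : ℝ) = (r : ℝ) - (1 + δ) := by field_simp
  subst hγ
  unfold gcond
  simp only [bdryS] at h
  push_cast at h ⊢
  rw [e] at h ⊢
  linarith

/-- Finite-horizon expected `I`-increment. -/
noncomputable def Tval (r : ℕ) (ε : ℝ) (F : RStrategy) (U0 : RState) (t : ℕ) : ℝ≥0∞ :=
  ∑' hf : Fin t → Bool × ℕ,
    pmfPi (coinPMF ε F.aux) t hf *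
      (((rstep r F U0 (extendFin (false, 0) hf) t).I - U0.I).toNat : ℝ≥0∞)

lemma step1_I_le (r : ℕ) (F : RStrategy) (U0 : RState) (x : Bool × ℕ) :
    U0.I ≤ (step1 r F U0 x).I := by
  unfold step1 bdryS extS pruneS
  split_ifs <;> first | exact le_rfl | exact le_of_lt (lt_add_one _)

lemma Tval_succ (r : ℕ) (ε : ℝ) (F : RStrategy) (U0 : RState) (t : ℕ) :
    Tval r ε F U0 (t + 1)
      = ∑' x : Bool × ℕ, coinPMF ε F.aux x *
          ((((step1 r F U0 x).I - U0.I).toNat : ℝ≥0∞)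
            + Tval r ε (shiftStrat F x) (step1 r F U0 x) t) := by
  rw [Tval, tsum_pmfPi_succ]
  refine tsum_congr fun x => ?_
  congr 1
  have hw : ∀ gf : Fin t → Bool × ℕ,
      ((((rstep r F U0 (extendFin (false, 0) (Fin.cons x gf)) (t + 1)).I - U0.I).toNat : ℕ) : ℝ≥0∞)
        = (((step1 r F U0 x).I - U0.I).toNat : ℝ≥0∞)
          + (((rstep r (shiftStrat F x) (step1 r F U0 x) (extendFin (false, 0) gf) t).I
              - (step1 r F U0 x).I).toNat : ℝ≥0∞) := by
    intro gf
    rw [extendFin_cons, rstep_shift]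
    have h1 : U0.I ≤ (step1 r F U0 x).I := step1_I_le r F U0 x
    have h2 : (step1 r F U0 x).I
        ≤ (rstep r (shiftStrat F x) (step1 r F U0 x) (extendFin (false, 0) gf) t).I :=
      rstep_I_le _ _ _ _ t
    have h3 : ((rstep r (shiftStrat F x) (step1 r F U0 x) (extendFin (false, 0) gf) t).I
          - U0.I).toNat
        = ((step1 r F U0 x).I - U0.I).toNat
          + ((rstep r (shiftStrat F x) (step1 r F U0 x) (extendFin (false, 0) gf) t).I
              - (step1 r F U0 x).I).toNat := by omega
    rw [h3, Nat.cast_add]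
  calc ∑' gf : Fin t → Bool × ℕ, pmfPi (coinPMF ε F.aux) t gf *
        (((rstep r F U0 (extendFin (false, 0) (Fin.cons x gf)) (t + 1)).I - U0.I).toNat : ℝ≥0∞)
      = ∑' gf : Fin t → Bool × ℕ,
          (pmfPi (coinPMF ε F.aux) t gf * (((step1 r F U0 x).I - U0.I).toNat : ℝ≥0∞)
            + pmfPi (coinPMF ε F.aux) t gf *
              (((rstep r (shiftStrat F x) (step1 r F U0 x) (extendFin (false, 0) gf) t).I
                - (step1 r F U0 x).I).toNat : ℝ≥0∞)) :=
        tsum_congr fun gf => by rw [hw gf, mul_add]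
    _ = (∑' gf : Fin t → Bool × ℕ, pmfPi (coinPMF ε F.aux) t gf *
            (((step1 r F U0 x).I - U0.I).toNat : ℝ≥0∞))
          + ∑' gf : Fin t → Bool × ℕ, pmfPi (coinPMF ε F.aux) t gf *
            (((rstep r (shiftStrat F x) (step1 r F U0 x) (extendFin (false, 0) gf) t).I
              - (step1 r F U0 x).I).toNat : ℝ≥0∞) := ENNReal.tsum_add
    _ = (((step1 r F U0 x).I - U0.I).toNat : ℝ≥0∞)
          + Tval r ε (shiftStrat F x) (step1 r F U0 x) t := by
        rw [ENNReal.tsum_mul_right, PMF.tsum_coe, one_mul]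
        rfl

lemma Tval_le_gval {r : ℕ} (hr : 2 ≤ r) {δ : ℝ} (hδ : 0 < δ) (ε : ℝ) {γ : ℝ}
    (hγ : γ = 1 - (1 + δ) / r) :
    ∀ (t : ℕ) (F : RStrategy) (U0 : RState), RAdmissible r γ F U0 →
      Tval r ε F U0 t ≤ gval r δ (min (ENNReal.ofReal ε) 1) t U0 := by
  set p := min (ENNReal.ofReal ε) 1 with hp'
  have hp : p ≤ 1 := min_le_right _ _
  intro t
  induction t with
  | zero =>
    intro F U0 _
    simp [Tval, gval]
    exact Or.inr le_rfl
  | succ t ih =>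
    intro F U0 hadm
    by_cases hS : U0.S ≤ 0
    · have h0 : Tval r ε F U0 (t + 1) = 0 := by
        rw [Tval]
        convert tsum_zero with hf
        rw [rstep_frozen r F U0 _ hS]
        simp
      rw [h0]; exact zero_le
    · rw [Tval_succ]
      have hb1 : ∀ x : Bool × ℕ,
          coinPMF ε F.aux x * ((((step1 r F U0 x).I - U0.I).toNat : ℝ≥0∞)
            + Tval r ε (shiftStrat F x) (step1 r F U0 x) t)
          ≤ coinPMF ε F.aux x * ((((step1 r F U0 x).I - U0.I).toNat : ℝ≥0∞)
            + gval r δ p t (step1 r F U0 x)) :=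
        fun x => mul_le_mul_right (add_le_add_right (ih _ _ (RAdmissible_shift hadm x)) _) _
      refine le_trans (Summable.tsum_le_tsum hb1 ENNReal.summable ENNReal.summable) ?_
      rw [tsum_coinPMF]
      have hu : ∀ u : ℕ,
          p * ((((step1 r F U0 (true, u)).I - U0.I).toNat : ℝ≥0∞)
              + gval r δ p t (step1 r F U0 (true, u)))
            + (1 - p) * ((((step1 r F U0 (false, u)).I - U0.I).toNat : ℝ≥0∞)
              + gval r δ p t (step1 r F U0 (false, u)))
          ≤ gval r δ p (t + 1) U0 := by
        intro u
        by_cases hd : F.decide [] u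
        · have hstep : ∀ c : Bool, step1 r F U0 (c, u) = bdryS r U0 := fun c => by
            rw [step1, if_neg hS, if_pos hd]
          have hcond : gcond r δ U0 := by
            have hadm1 := hadm (consStream (true, u) fun _ => (true, u)) 1
            rw [rstep_one] at hadm1
            have hc0 : (consStream (true, u) fun _ => (true, u)) 0 = (true, u) := rfl
            rw [hc0, hstep true] at hadm1
            exact gcond_of_bdry_adm hr hγ hadm1
          have hj : (((bdryS r U0).I - U0.I).toNat : ℝ≥0∞) = 1 := by simp [bdryS]
          rw [hstep true, hstep false, hj, gval, if_neg hS, if_pos hcond,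
            ← add_mul, add_tsub_cancel_of_le hp, one_mul]
        · have hstept : step1 r F U0 (true, u) = extS r U0 := by
            simp [step1, hS, hd]
          have hstepf : step1 r F U0 (false, u) = pruneS U0 := by
            simp [step1, hS, hd]
          have hj1 : (((extS r U0).I - U0.I).toNat : ℝ≥0∞) = 1 := by simp [extS]
          have hj2 : (((pruneS U0).I - U0.I).toNat : ℝ≥0∞) = 0 := by simp [pruneS]
          rw [hstept, hstepf, hj1, hj2, zero_add]
          by_cases hcond : gcond r δ U0
          · rw [gval, if_neg hS, if_pos hcond]
            exact gval_key hr hδ hp t U0 (by omega) hcond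
          · rw [gval, if_neg hS, if_neg hcond]
      calc ∑' u : ℕ, F.aux u *
            (p * ((((step1 r F U0 (true, u)).I - U0.I).toNat : ℝ≥0∞)
                + gval r δ p t (step1 r F U0 (true, u)))
              + (1 - p) * ((((step1 r F U0 (false, u)).I - U0.I).toNat : ℝ≥0∞)
                + gval r δ p t (step1 r F U0 (false, u))))
          ≤ ∑' u : ℕ, F.aux u * gval r δ p (t + 1) U0 :=
            Summable.tsum_le_tsum (fun u => mul_le_mul_right (hu u) _)
              ENNReal.summable ENNReal.summable
        _ = gval r δ p (t + 1) U0 := by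
            rw [ENNReal.tsum_mul_right, PMF.tsum_coe, one_mul]

/-- The greedy strategy with replay base `W`. -/
noncomputable def gstrat (r : ℕ) (δ : ℝ) (W : RState) : RStrategy where
  aux := PMF.pure 0
  decide hist _ := if gcond r δ (hist.foldl (greedyStep r δ) W) then true else false

lemma greedy_eq_gstrat (r : ℕ) (δ : ℝ) (U : RState) : greedy r δ U = gstrat r δ U := rfl

lemma greedyStep_eq (r : ℕ) (δ : ℝ) (W : RState) (x : Bool × ℕ) :
    greedyStep r δ W x = if W.S ≤ 0 then W
      else if gcond r δ W then bdryS r W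
      else if x.1 then extS r W else pruneS W := rfl

lemma shift_gstrat (r : ℕ) (δ : ℝ) (W : RState) (x : Bool × ℕ) :
    shiftStrat (gstrat r δ W) x = gstrat r δ (greedyStep r δ W x) := rfl

lemma step1_gstrat (r : ℕ) (δ : ℝ) (W : RState) (x : Bool × ℕ) :
    step1 r (gstrat r δ W) W x = greedyStep r δ W x := by
  rw [greedyStep_eq, step1]
  by_cases hS : W.S ≤ 0
  · rw [if_pos hS, if_pos hS]
  · rw [if_neg hS, if_neg hS]
    by_cases hg : gcond r δ W
    · rw [if_pos hg, if_pos]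
      simp [gstrat, hg]
    · rw [if_neg hg, if_neg]
      simp [gstrat, hg]

lemma gval_le_Tval (r : ℕ) (δ : ℝ) (ε : ℝ) :
    ∀ (t : ℕ) (W : RState),
      gval r δ (min (ENNReal.ofReal ε) 1) t W ≤ Tval r ε (gstrat r δ W) W t := by
  set p := min (ENNReal.ofReal ε) 1 with hp'
  have hp : p ≤ 1 := min_le_right _ _
  intro t
  induction t with
  | zero =>
    intro W
    simp only [gval]
    exact zero_le
  | succ t ih =>
    intro W
    by_cases hS : W.S ≤ 0
    · rw [gval, if_pos hS]; exact zero_le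
    · rw [Tval_succ]
      have hb1 : ∀ x : Bool × ℕ,
          coinPMF ε (gstrat r δ W).aux x * ((((greedyStep r δ W x).I - W.I).toNat : ℝ≥0∞)
            + gval r δ p t (greedyStep r δ W x))
          ≤ coinPMF ε (gstrat r δ W).aux x *
            ((((step1 r (gstrat r δ W) W x).I - W.I).toNat : ℝ≥0∞)
              + Tval r ε (shiftStrat (gstrat r δ W) x) (step1 r (gstrat r δ W) W x) t) := by
        intro x
        rw [step1_gstrat, shift_gstrat]
        exact mul_le_mul_right (add_le_add_right (ih (greedyStep r δ W x)) _) _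
      refine le_trans ?_ (Summable.tsum_le_tsum hb1 ENNReal.summable ENNReal.summable)
      rw [tsum_coinPMF]
      have hpure : ∀ G : ℕ → ℝ≥0∞, ∑' u, (gstrat r δ W).aux u * G u = G 0 := by
        intro G
        rw [show (gstrat r δ W).aux = (PMF.pure 0 : PMF ℕ) from rfl]
        rw [tsum_eq_single 0 (fun u hu => by simp [PMF.pure_apply, hu])]
        simp [PMF.pure_apply]
      rw [hpure]
      by_cases hg : gcond r δ W
      · have h1 : greedyStep r δ W (true, 0) = bdryS r W := by
          rw [greedyStep_eq, if_neg hS, if_pos hg]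
        have h2 : greedyStep r δ W (false, 0) = bdryS r W := by
          rw [greedyStep_eq, if_neg hS, if_pos hg]
        have hj : (((bdryS r W).I - W.I).toNat : ℝ≥0∞) = 1 := by simp [bdryS]
        rw [h1, h2, hj, gval, if_neg hS, if_pos hg,
          ← add_mul, add_tsub_cancel_of_le hp, one_mul]
      · have h1 : greedyStep r δ W (true, 0) = extS r W := by
          simp [greedyStep_eq, hS, hg]
        have h2 : greedyStep r δ W (false, 0) = pruneS W := by
          simp [greedyStep_eq, hS, hg]
        have hj1 : (((extS r W).I - W.I).toNat : ℝ≥0∞) = 1 := by simp [extS]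
        have hj2 : (((pruneS W).I - W.I).toNat : ℝ≥0∞) = 0 := by simp [pruneS]
        rw [h1, h2, hj1, hj2, zero_add, gval, if_neg hS, if_neg hg]

end Stmt11Aux



/-- the greedy strategy dominates every admissible strategy:
for every initial state `U` and admissible strategy `F`,
`E[I_∞(U,F^g)] ≥ E[I_∞(U,F)]` (the initial `I`-values agree, so it suffices
to compare the expected increments). -/
theorem stmt11 (r : ℕ) (hr : 2 ≤ r) (ε : ℝ) (hε0 : 0 ≤ ε) (hε1 : ε ≤ 1)
    (δ : ℝ) (hδ : 0 < δ) (γ : ℝ) (hγ : γ = 1 - (1 + δ) / r)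
    (U : RState) (F : RStrategy) (hadm : RAdmissible r γ F U) :
    EIinc r ε F U ≤ EIinc r ε (greedy r δ U) U := by
  have e1 : EIinc r ε F U = ⨆ t, Tval r ε F U t := rfl
  have e2 : EIinc r ε (greedy r δ U) U = ⨆ t, Tval r ε (gstrat r δ U) U t := by
    rw [greedy_eq_gstrat]; rfl
  rw [e1, e2]
  exact iSup_mono fun t =>
    le_trans (Tval_le_gval hr hδ ε hγ t F U hadm) (gval_le_Tval r δ ε t U)
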